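/- Let ρ > 0, τ := 1/ρ, δ ∈ [0,1], μ > 0, λ > 0 constants, and let g : ℝ → ℝ₊ be bounded, measurable, and satisfy g(t) → 0 as t → +∞. Fix s ≥ 0 and define β(s,t) := λ ∫_{s−τ}^{t−τ} exp(−μ(t−τ−u) − ∫_0^{δτ} g(u+w) dw) du for t ≥ s. Then β(s,t) → λ/μ as t → +∞; in particular β(s,t) is asymptotically equivalent to (1 − e^{−(t−s)μ}) λ/μ as t → +∞. -/

import Mathlib

open Filter Asymptotics

/-- Section 2.3.3: when the killing function `g` vanishes at infinity, the parameter
`β(s,t) = λ ∫_{s−τ}^{t−τ} exp(−μ(t−τ−u) − ∫_0^{δτ} g(u+w) dw) du` tends to `λ/μ` as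
`t → ∞`; in particular it is asymptotically equivalent to `(1 − e^{−(t−s)μ}) λ/μ`. -/
theorem beta_tendsto_equilibrium (rho : ℝ) (hrho : 0 < rho)
    (tau : ℝ) (htau : tau = 1 / rho)
    (δ : ℝ) (hδ : δ ∈ Set.Icc (0:ℝ) 1) (mu : ℝ) (hmu : 0 < mu)
    (lam : ℝ) (hlam : 0 < lam)
    (g : ℝ → ℝ) (hg_meas : Measurable g) (hg0 : ∀ t, 0 ≤ g t)
    (C : ℝ) (hgC : ∀ t, g t ≤ C)
    (hgtend : Tendsto g atTop (nhds 0))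
    (s : ℝ) (hs : 0 ≤ s)
    (β : ℝ → ℝ)
    (hβ : ∀ t, β t =
      lam * ∫ u in (s - tau)..(t - tau),
        Real.exp (-(mu * (t - tau - u)) - ∫ w in (0:ℝ)..(δ * tau), g (u + w))) :
    Tendsto β atTop (nhds (lam / mu)) ∧
    β ~[atTop] (fun t => (1 - Real.exp (-(t - s) * mu)) * (lam / mu)) := by
  have htau0 : 0 < tau := by rw [htau]; positivity
  set T : ℝ := δ * tau with hTdef
  have hT : 0 ≤ T := mul_nonneg hδ.1 htau0.le
  -- g is interval integrable
  have hgint : ∀ a b : ℝ, IntervalIntegrable g MeasureTheory.volume a b := by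
    intro a b
    rw [intervalIntegrable_iff]
    refine MeasureTheory.Integrable.mono' (g := fun _ => C)
      ((MeasureTheory.integrableOn_const_iff (C := C)).mpr (Or.inr measure_Ioc_lt_top))
      hg_meas.aestronglyMeasurable ?_
    filter_upwards with x
    rw [Real.norm_eq_abs, abs_of_nonneg (hg0 x)]
    exact hgC x
  -- The inner integral as a function of u
  set G : ℝ → ℝ := fun u => ∫ w in (0:ℝ)..T, g (u + w) with hGdef
  have hGapp : ∀ u, G u = ∫ w in (0:ℝ)..T, g (u + w) := fun u => rfl
  have hGint : ∀ u : ℝ, IntervalIntegrable (fun w => g (u + w)) MeasureTheory.volume 0 T := by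
    intro u
    have := (hgint u (u + T)).comp_add_left u
    simpa using this
  have hG0 : ∀ u, 0 ≤ G u := fun u =>
    intervalIntegral.integral_nonneg hT (fun w _ => hg0 _)
  have hGeq : ∀ u, G u = (∫ x in (0:ℝ)..(u + T), g x) - ∫ x in (0:ℝ)..u, g x := by
    intro u
    rw [hGapp u, intervalIntegral.integral_comp_add_left g u]
    simp only [add_zero]
    exact (intervalIntegral.integral_interval_sub_left (hgint 0 (u + T)) (hgint 0 u)).symm
  have hGcont : Continuous G := by
    have h1 := intervalIntegral.continuous_primitive hgint 0
    have h2 : Continuous fun u : ℝ => (∫ x in (0:ℝ)..(u + T), g x) - ∫ x in (0:ℝ)..u, g x :=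
      (h1.comp (continuous_id.add continuous_const)).sub h1
    exact (funext hGeq ▸ h2)
  -- G tends to 0 at infinity
  have hGtend : Tendsto G atTop (nhds 0) := by
    rw [NormedAddCommGroup.tendsto_nhds_zero]
    intro ε hε
    have hε' : 0 < ε / (T + 1) := by positivity
    have h2 : ∀ᶠ x in atTop, g x < ε / (T + 1) := hgtend.eventually_lt_const hε'
    obtain ⟨A, hA⟩ := eventually_atTop.mp h2
    filter_upwards [eventually_ge_atTop A] with u hu
    rw [Real.norm_eq_abs, abs_of_nonneg (hG0 u)]
    have hle : G u ≤ T * (ε / (T + 1)) := by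
      rw [hGapp u]
      calc (∫ w in (0:ℝ)..T, g (u + w)) ≤ ∫ _w in (0:ℝ)..T, ε / (T + 1) := by
            apply intervalIntegral.integral_mono_on hT (hGint u) intervalIntegrable_const
            intro w hw
            exact le_of_lt (hA (u + w) (by linarith [hw.1]))
        _ = T * (ε / (T + 1)) := by simp [mul_div_assoc]
    have : T * (ε / (T + 1)) < (T + 1) * (ε / (T + 1)) := by
      apply mul_lt_mul_of_pos_right _ hε'
      linarith
    have heq : (T + 1) * (ε / (T + 1)) = ε := by field_simp
    linarith
  -- rewrite β via substitution v = t - tau - u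
  have hβ2 : ∀ t, s ≤ t → β t = lam * ∫ v, Set.indicator (Set.Ioc 0 (t - s))
      (fun v => Real.exp (-(mu * v) - G (t - tau - v))) v := by
    intro t ht
    rw [hβ t]
    congr 1
    have h1 : (∫ u in (s - tau)..(t - tau),
        Real.exp (-(mu * (t - tau - u)) - ∫ w in (0:ℝ)..T, g (u + w)))
        = ∫ u in (s - tau)..(t - tau),
            (fun v => Real.exp (-(mu * v) - G (t - tau - v))) ((t - tau) - u) := by
      apply intervalIntegral.integral_congr
      intro u _
      have h2 : t - tau - (t - tau - u) = u := by ring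
      simp only [h2, hGapp]
    have h2 := intervalIntegral.integral_comp_sub_left (a := s - tau) (b := t - tau)
      (fun v => Real.exp (-(mu * v) - G (t - tau - v))) (t - tau)
    rw [h1, h2]
    have hb1 : t - tau - (t - tau) = 0 := by ring
    have hb2 : t - tau - (s - tau) = t - s := by ring
    rw [hb1, hb2, intervalIntegral.integral_of_le (by linarith : (0:ℝ) ≤ t - s),
      ← MeasureTheory.integral_indicator measurableSet_Ioc]
  -- dominated convergence
  have hval : (∫ v, Set.indicator (Set.Ioi (0:ℝ)) (fun v => Real.exp (-mu * v)) v) = 1 / mu := by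
    rw [MeasureTheory.integral_indicator measurableSet_Ioi]
    have := MeasureTheory.integral_comp_mul_left_Ioi (fun x => Real.exp (-x)) 0 hmu
    simp only [mul_zero, neg_mul] at this ⊢
    rw [this, integral_exp_neg_Ioi]
    simp [one_div]
  have key : Tendsto (fun t => ∫ v, Set.indicator (Set.Ioc 0 (t - s))
      (fun v => Real.exp (-(mu * v) - G (t - tau - v))) v) atTop (nhds (1 / mu)) := by
    rw [← hval]
    apply MeasureTheory.tendsto_integral_filter_of_dominated_convergence
      (Set.indicator (Set.Ioi (0:ℝ)) (fun v => Real.exp (-mu * v)))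
    · filter_upwards with t
      apply MeasureTheory.AEStronglyMeasurable.indicator _ measurableSet_Ioc
      apply Continuous.aestronglyMeasurable
      exact Real.continuous_exp.comp
        (((continuous_const.mul continuous_id).neg).sub
          (hGcont.comp (continuous_const.sub continuous_id)))
    · filter_upwards with t
      filter_upwards with v
      by_cases hv : v ∈ Set.Ioc 0 (t - s)
      · rw [Set.indicator_of_mem hv,
          Set.indicator_of_mem (Set.Ioc_subset_Ioi_self hv : v ∈ Set.Ioi 0)]
        rw [Real.norm_eq_abs, abs_of_nonneg (Real.exp_pos _).le]
        apply Real.exp_le_exp.mpr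
        have := hG0 (t - tau - v)
        nlinarith
      · rw [Set.indicator_of_notMem hv, norm_zero]
        exact Set.indicator_nonneg (fun x _ => (Real.exp_pos _).le) v
    · exact (MeasureTheory.integrable_indicator_iff measurableSet_Ioi).mpr
        (exp_neg_integrableOn_Ioi 0 hmu)
    · filter_upwards with v
      by_cases hv : (0:ℝ) < v
      · have h0 : Tendsto (fun t : ℝ => t - tau - v) atTop atTop := by
          simp only [sub_eq_add_neg, add_assoc]
          exact tendsto_atTop_add_const_right _ _ tendsto_id
        have h1 : Tendsto (fun t => Real.exp (-(mu * v) - G (t - tau - v))) atTop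
            (nhds (Real.exp (-(mu * v) - 0))) :=
          (Real.continuous_exp.tendsto _).comp (tendsto_const_nhds.sub (hGtend.comp h0))
        have heq : (fun t => Real.exp (-(mu * v) - G (t - tau - v))) =ᶠ[atTop]
            (fun t => Set.indicator (Set.Ioc 0 (t - s))
              (fun v => Real.exp (-(mu * v) - G (t - tau - v))) v) := by
          filter_upwards [eventually_ge_atTop (s + v)] with t ht
          exact (Set.indicator_of_mem (Set.mem_Ioc.mpr ⟨hv, by linarith⟩)
            (fun v => Real.exp (-(mu * v) - G (t - tau - v)))).symm
        have h2 := h1.congr' heq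
        rw [Set.indicator_of_mem (Set.mem_Ioi.mpr hv)]
        simpa [neg_mul] using h2
      · have hz : ∀ t : ℝ, Set.indicator (Set.Ioc 0 (t - s))
            (fun v => Real.exp (-(mu * v) - G (t - tau - v))) v = 0 :=
          fun t => Set.indicator_of_notMem (fun h => hv h.1) _
        rw [Set.indicator_of_notMem (by simpa using hv)]
        exact Tendsto.congr (fun t => (hz t).symm) tendsto_const_nhds
  -- first conclusion
  have hβtend : Tendsto β atTop (nhds (lam / mu)) := by
    have h1 : Tendsto (fun t => lam * ∫ v, Set.indicator (Set.Ioc 0 (t - s))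
        (fun v => Real.exp (-(mu * v) - G (t - tau - v))) v) atTop (nhds (lam * (1 / mu))) :=
      key.const_mul lam
    have h2 : lam * (1 / mu) = lam / mu := by ring
    rw [h2] at h1
    refine Tendsto.congr' ?_ h1
    filter_upwards [eventually_ge_atTop s] with t ht
    exact (hβ2 t ht).symm
  -- second conclusion
  have hrhs : Tendsto (fun t => (1 - Real.exp (-(t - s) * mu)) * (lam / mu)) atTop
      (nhds (lam / mu)) := by
    have h0 : Tendsto (fun t : ℝ => (t - s) * mu) atTop atTop := by
      apply Tendsto.atTop_mul_const hmu
      simp only [sub_eq_add_neg]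
      exact tendsto_atTop_add_const_right _ _ tendsto_id
    have h1 : Tendsto (fun t : ℝ => -(t - s) * mu) atTop atBot := by
      simp only [neg_mul]
      exact tendsto_neg_atTop_atBot.comp h0
    have h2 : Tendsto (fun t => Real.exp (-(t - s) * mu)) atTop (nhds 0) :=
      Real.tendsto_exp_atBot.comp h1
    have h3 : Tendsto (fun t => (1 - Real.exp (-(t - s) * mu)) * (lam / mu)) atTop
        (nhds ((1 - 0) * (lam / mu))) := (tendsto_const_nhds.sub h2).mul_const (lam / mu)
    rw [show (1 - (0:ℝ)) * (lam / mu) = lam / mu by ring] at h3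
    exact h3
  have hne : ∀ᶠ t in atTop, (1 - Real.exp (-(t - s) * mu)) * (lam / mu) ≠ 0 :=
    hrhs.eventually_ne (by positivity)
  refine ⟨hβtend, (isEquivalent_iff_tendsto_one hne).mpr ?_⟩
  have hq : (lam / mu) ≠ 0 := by positivity
  have := hβtend.div hrhs hq
  rw [div_self hq] at this
  exact this
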